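/- Suppose u : D ⇄ C : η is an adjunction (u left adjoint) with unit α : id → η∘u, and let E be the pullback of ev₁ : D^{Δ¹} → D along η : C → D, with projection G : E → D^{Δ¹}. Then the composite ev₀ ∘ G : E → D has a fully faithful left adjoint sending X ∈ D to the object (u(X), α_X : X → η u(X)). -/

import Mathlib

open CategoryTheory

universe v₁ v₂ u₁ u₂

variable {D : Type u₁} [Category.{v₁} D] {C : Type u₂} [Category.{v₂} C]

/-- Given an adjunction `u ⊣ η` with unit `α`, the functor `D → E` (where
`E = C ×_D D^{Δ¹}` is the category of triples `(c, d, f : d → η c)`) sending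
`X` to `(u X, X, α_X : X → η (u X))`. -/
def unitTripleFunctor (u : D ⥤ C) (η : C ⥤ D) (adj : u ⊣ η) : D ⥤ Comma (𝟭 D) η where
  obj X := { left := X, right := u.obj X, hom := adj.unit.app X }
  map {X Y} f :=
    { left := f
      right := u.map f
      w := by simpa using adj.unit.naturality f }

/-- The adjunction `unitTripleFunctor ⊣ Comma.fst`. -/
def unitTripleAdjunction (u : D ⥤ C) (η : C ⥤ D) (adj : u ⊣ η) :
    unitTripleFunctor u η adj ⊣ Comma.fst (𝟭 D) η :=
  Adjunction.mkOfHomEquiv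
    { homEquiv := fun X Y =>
        { toFun := fun g => g.left
          invFun := fun g =>
            { left := g
              right := (adj.homEquiv X Y.right).symm (g ≫ Y.hom)
              w := by
                have := (adj.homEquiv X Y.right).apply_symm_apply (g ≫ Y.hom)
                rw [Adjunction.homEquiv_unit] at this
                exact this.symm }
          left_inv := by
            intro g
            ext
            · rfl
            · apply (adj.homEquiv X Y.right).injective
              have := g.w
              simp only [Functor.id_map] at this
              rw [Adjunction.homEquiv_unit, ← Adjunction.homEquiv_unit,
                Equiv.apply_symm_apply]
              exact this
          right_inv := fun g => rfl }
      homEquiv_naturality_left_symm := by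
        intro X X' Y f g
        ext
        · rfl
        · simp [Adjunction.homEquiv_naturality_left_symm, unitTripleFunctor]
          exact u.map_comp_assoc f g _
      homEquiv_naturality_right := by intro X Y Y' f g; rfl }

/-- Let `u : D ⇄ C : η` be an adjunction (`u` left adjoint) with unit
`α : id → η ∘ u`, and let `E` be the pullback of `ev₁ : D^{Δ¹} → D` along `η : C → D`,
i.e. the category of triples `(c, d, f : d → η c)`, with `G : E → D^{Δ¹}` the projection.
Then the composite `ev₀ ∘ G : E → D`, `(c, d, f) ↦ d`, has a fully faithful left adjoint
sending `X` to `(u X, α_X : X → η (u X))`. -/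
theorem unitTripleFunctor_fullyFaithful_leftAdjoint
    (u : D ⥤ C) (η : C ⥤ D) (adj : u ⊣ η) :
    Nonempty (unitTripleFunctor u η adj ⊣ Comma.fst (𝟭 D) η) ∧
    (unitTripleFunctor u η adj).Full ∧ (unitTripleFunctor u η adj).Faithful := by
  refine ⟨⟨unitTripleAdjunction u η adj⟩, ?_, ?_⟩
  · constructor
    intro X Y g
    refine ⟨g.left, ?_⟩
    ext
    · rfl
    · apply (adj.homEquiv X (u.obj Y)).injective
      have := g.w
      simp only [unitTripleFunctor, Functor.id_map] at this ⊢
      simp [Adjunction.homEquiv_unit, ← this]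
  · constructor
    intro X Y f g h
    have := congrArg CommaMorphism.left h
    simpa [unitTripleFunctor] using this
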